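/- Let n ≥ 2, m ≥ 3, and let P be a regular m-th order, n-dimensional stochastic tensor on S = {1,…,n}, with limiting probability distribution π (i.e., lim_{k→∞} p^{(k)}_{i1 i2 … i_m} = π_{i1} for all indices). Let ξ be any stationary distribution of the reduced first order chain: ξ is indexed by (m−1)-tuples from S, ξ ≥ 0 entrywise, the entries of ξ sum to 1, and Qξ = ξ where Q is the reduced transition matrix of P. Then for every i1 ∈ S, π_{i1} = Σ_{j2,…,j_{m−1} ∈ S} ξ_{(i1, j2, …, j_{m−1})}. (This is the identity π = P^{(0)} ξ, where P^{(0)} is the mode-1 matricization of the identity tensor.) -/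
import Mathlib


open Finset

/-- An `m`-th order, `n`-dimensional tensor with `m = r + 2`: the entry
`p_{i₁ i₂ … i_m}` is written `P i₁ t`, where `t = (i₂, …, i_m)` is the tail of
`m - 1 = r + 1` indices. -/
abbrev HOTensor (n r : ℕ) := Fin n → (Fin (r + 1) → Fin n) → ℝ

/-- `P` is a stochastic tensor. -/
def IsStochasticT {n r : ℕ} (P : HOTensor n r) : Prop :=
  (∀ i t, 0 ≤ P i t ∧ P i t ≤ 1) ∧ ∀ t, ∑ i : Fin n, P i t = 1

/-- The product `A ⊠ B`:
`(A ⊠ B)_{i₁ i₂ … i_m} = Σ_j a_{i₁ j i₂ … i_{m-1}} b_{j i₂ … i_m}`. -/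
def tmul {n r : ℕ} (A B : HOTensor n r) : HOTensor n r :=
  fun i t => ∑ j : Fin n, A i (Fin.cons j (Fin.init t)) * B j t

/-- Tensor powers: `tpow P k` is `P^k`, with entries the `k`-step transition
probabilities `p^{(k)}_{i₁ … i_m}`; `P^0` is the identity tensor. -/
def tpow {n r : ℕ} (P : HOTensor n r) : ℕ → HOTensor n r
  | 0 => fun i t => if i = t 0 then 1 else 0
  | k + 1 => tmul (tpow P k) P

/-- `fpp P k` is the `(k+1)`-step first passage probability tensor `F^{[k+1]}`:
`f^{[1]} = p`, and `f^{[k+1]}_{i₁ i₂ … i_m} = Σ_{j ≠ i₁} f^{[k]}_{i₁ j i₂ … i_{m-1}} p_{j i₂ … i_m}`. -/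
def fpp {n r : ℕ} (P : HOTensor n r) : ℕ → HOTensor n r
  | 0 => P
  | k + 1 => fun i t =>
      ∑ j ∈ Finset.univ.filter (fun j => j ≠ i), fpp P k i (Fin.cons j (Fin.init t)) * P j t

/-- The ever-reaching probability `f_{i₁ i₂ … i_m} = Σ_{k=1}^∞ f^{[k]}_{i₁ i₂ … i_m}`. -/
noncomputable def everReach {n r : ℕ} (P : HOTensor n r) : HOTensor n r :=
  fun i t => ∑' k : ℕ, fpp P k i t

/-- State `j` is reachable from state `i` (`i → j`): for every choice of
`i₃, …, i_m` there is `k ≥ 0` with `p^{(k)}_{j i i₃ … i_m} > 0`. -/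
def Reach {n r : ℕ} (P : HOTensor n r) (i j : Fin n) : Prop :=
  ∀ u : Fin r → Fin n, ∃ k : ℕ, 0 < tpow P k j (Fin.cons i u)

/-- States `i` and `j` communicate (`i ↔ j`). -/
def Comm {n r : ℕ} (P : HOTensor n r) (i j : Fin n) : Prop :=
  Reach P i j ∧ Reach P j i

/-- State `i` is recurrent: `f_{i i i₃ … i_m} = 1` for all `i₃, …, i_m`. -/
def RecurrentState {n r : ℕ} (P : HOTensor n r) (i : Fin n) : Prop :=
  ∀ u : Fin r → Fin n, everReach P i (Fin.cons i u) = 1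

/-- State `i` is fully transient: `f_{i i i₃ … i_m} < 1` for all `i₃, …, i_m`. -/
def FullyTransientState {n r : ℕ} (P : HOTensor n r) (i : Fin n) : Prop :=
  ∀ u : Fin r → Fin n, everReach P i (Fin.cons i u) < 1

/-- `P` is ergodic: for all indices there is `k ≥ 1` with `p^{(k)}_{i₁ … i_m} > 0`. -/
def ErgodicT {n r : ℕ} (P : HOTensor n r) : Prop :=
  ∀ (i : Fin n) (t : Fin (r + 1) → Fin n), ∃ k : ℕ, 1 ≤ k ∧ 0 < tpow P k i t

/-- `P` is regular: some power `P^k`, `k ≥ 1`, has all entries positive. -/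
def RegularT {n r : ℕ} (P : HOTensor n r) : Prop :=
  ∃ k : ℕ, 1 ≤ k ∧ ∀ (i : Fin n) (t : Fin (r + 1) → Fin n), 0 < tpow P k i t

/-- The reduced transition matrix `Q` of `P`: rows and columns are indexed by
`(m-1)`-tuples; the entry in row `(i₁, …, i_{m-1})` and column `(j₁, …, j_{m-1})`
is `p_{i₁ i₂ … i_{m-1} j_{m-1}}` if `j_ℓ = i_{ℓ+1}` for `ℓ = 1, …, m-2`, else `0`. -/
def reducedT {n r : ℕ} (P : HOTensor n r) :
    Matrix (Fin (r + 1) → Fin n) (Fin (r + 1) → Fin n) ℝ :=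
  fun u v =>
    if ∀ ℓ : Fin r, v ℓ.castSucc = u ℓ.succ then
      P (u 0) (Fin.snoc (Fin.tail u) (v (Fin.last r)))
    else 0


lemma sum_fun_split {n r : ℕ} (f : (Fin (r + 1) → Fin n) → ℝ) :
    ∑ u : Fin (r + 1) → Fin n, f u
      = ∑ j : Fin n, ∑ ws : Fin r → Fin n, f (Fin.cons j ws) := by
  calc ∑ u : Fin (r + 1) → Fin n, f u
      = ∑ p : Fin n × (Fin r → Fin n), f (Fin.cons p.1 p.2) :=
        (Fintype.sum_equiv (Fin.consEquiv fun _ => Fin n)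
          (fun p => f (Fin.cons p.1 p.2)) f (fun p => rfl)).symm
    _ = ∑ j : Fin n, ∑ ws : Fin r → Fin n, f (Fin.cons j ws) := Fintype.sum_prod_type (fun p => f (Fin.cons p.1 p.2))

lemma sum_filter_zero {n r : ℕ} (i : Fin n) (g : (Fin (r + 1) → Fin n) → ℝ) :
    ∑ u ∈ Finset.univ.filter (fun u => u 0 = i), g u
      = ∑ ws : Fin r → Fin n, g (Fin.cons i ws) := by
  rw [Finset.sum_filter, sum_fun_split (fun u => if u 0 = i then g u else 0)]
  simp [Fin.cons_zero]

lemma reduced_cons {n r : ℕ} (P : HOTensor n r) (j : Fin n) (ws : Fin r → Fin n)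
    (v : Fin (r + 1) → Fin n) :
    reducedT P (Fin.cons j ws) v = if ws = Fin.init v then P j v else 0 := by
  unfold reducedT
  have hc : (∀ ℓ : Fin r, v ℓ.castSucc = (Fin.cons j ws : Fin (r+1) → Fin n) ℓ.succ) ↔ ws = Fin.init v := by
    constructor
    · intro h; funext ℓ; have := h ℓ; simp [Fin.cons_succ] at this
      simp [Fin.init, this]
    · intro h; intro ℓ; simp [h, Fin.cons_succ, Fin.init]
  by_cases h : ws = Fin.init v
  · rw [if_pos (hc.mpr h), if_pos h]
    subst h
    simp [Fin.tail_cons, Fin.cons_zero, Fin.snoc_init_self]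
  · rw [if_neg (fun hh => h (hc.mp hh)), if_neg h]

lemma key_sum {n r : ℕ} (P : HOTensor n r) (i : Fin n) :
    ∀ (k : ℕ) (v : Fin (r + 1) → Fin n),
      ∑ u ∈ Finset.univ.filter (fun u => u 0 = i), (reducedT P ^ k) u v
        = tpow P k i v := by
  intro k
  induction k with
  | zero =>
    intro v
    simp only [pow_zero, Matrix.one_apply, tpow]
    rw [Finset.sum_ite_eq' (Finset.univ.filter (fun u => u 0 = i)) v (fun _ => (1:ℝ))]
    simp [eq_comm]
  | succ k ih =>
    intro v
    have : ∑ u ∈ Finset.univ.filter (fun u => u 0 = i), (reducedT P ^ (k+1)) u v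
        = ∑ w, tpow P k i w * reducedT P w v := by
      simp only [pow_succ, Matrix.mul_apply]
      rw [Finset.sum_comm]
      refine Finset.sum_congr rfl fun w _ => ?_
      rw [← Finset.sum_mul, ih w]
    rw [this, sum_fun_split (fun w => tpow P k i w * reducedT P w v)]
    have : ∀ j : Fin n,
        ∑ ws : Fin r → Fin n, tpow P k i (Fin.cons j ws) * reducedT P (Fin.cons j ws) v
          = tpow P k i (Fin.cons j (Fin.init v)) * P j v := by
      intro j
      rw [Finset.sum_congr rfl (fun ws _ => by rw [reduced_cons])]
      simp [mul_ite]
    simp only [this]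
    rfl

/-- for a regular chain with limiting distribution `π`, and any
stationary distribution `ξ` of the reduced chain (`Qξ = ξ`, `ξ ≥ 0`, entries sum
to `1`), one has `π_{i₁} = Σ_{j₂,…,j_{m-1}} ξ_{(i₁, j₂, …, j_{m-1})}`. -/
theorem limiting_from_stationary (n r : ℕ) (hn : 2 ≤ n) (hr : 1 ≤ r)
    (P : HOTensor n r) (hP : IsStochasticT P) (hreg : RegularT P)
    (π : Fin n → ℝ)
    (hπ : ∀ (i : Fin n) (t : Fin (r + 1) → Fin n),
      Filter.Tendsto (fun k : ℕ => tpow P k i t) Filter.atTop (nhds (π i)))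
    (ξ : (Fin (r + 1) → Fin n) → ℝ)
    (hξ0 : ∀ u, 0 ≤ ξ u) (hξ1 : ∑ u : Fin (r + 1) → Fin n, ξ u = 1)
    (hstat : (reducedT P).mulVec ξ = ξ) :
    ∀ i : Fin n, π i = ∑ w : Fin r → Fin n, ξ (Fin.cons i w) := by
  intro i
  have hmv : ∀ k : ℕ, (reducedT P ^ k).mulVec ξ = ξ := by
    intro k
    induction k with
    | zero => simp [Matrix.one_mulVec]
    | succ k ih => rw [pow_succ, ← Matrix.mulVec_mulVec, hstat, ih]
  have hk : ∀ k : ℕ, ∑ w : Fin r → Fin n, ξ (Fin.cons i w)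
      = ∑ v : Fin (r + 1) → Fin n, tpow P k i v * ξ v := by
    intro k
    rw [← sum_filter_zero i ξ]
    have e1 : ∑ u ∈ Finset.univ.filter (fun u => u 0 = i), ξ u
        = ∑ u ∈ Finset.univ.filter (fun u => u 0 = i),
            ∑ v : Fin (r + 1) → Fin n, (reducedT P ^ k) u v * ξ v := by
      refine Finset.sum_congr rfl fun u _ => ?_
      conv_lhs => rw [← hmv k]
      rfl
    rw [e1, Finset.sum_comm]
    refine Finset.sum_congr rfl fun v _ => ?_
    rw [← Finset.sum_mul, key_sum]
  have hlim : Filter.Tendsto (fun k : ℕ => ∑ v : Fin (r + 1) → Fin n, tpow P k i v * ξ v)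
      Filter.atTop (nhds (∑ v : Fin (r + 1) → Fin n, π i * ξ v)) := by
    exact tendsto_finset_sum _ fun v _ => (hπ i v).mul tendsto_const_nhds
  have h1 : ∑ v : Fin (r + 1) → Fin n, π i * ξ v = π i := by
    rw [← Finset.mul_sum, hξ1, mul_one]
  have hconst : Filter.Tendsto (fun k : ℕ => ∑ v : Fin (r + 1) → Fin n, tpow P k i v * ξ v)
      Filter.atTop (nhds (∑ w : Fin r → Fin n, ξ (Fin.cons i w))) := by
    have : (fun k : ℕ => ∑ v : Fin (r + 1) → Fin n, tpow P k i v * ξ v)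
        = fun _ => ∑ w : Fin r → Fin n, ξ (Fin.cons i w) := by
      funext k; exact (hk k).symm
    rw [this]; exact tendsto_const_nhds
  rw [← h1]
  exact tendsto_nhds_unique hlim hconst
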